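/- Let X have the Laplace density ρ(x) = ½ exp(−|x|) on ℝ and let Z ~ N(0,1) be independent of X. For p, q > 0 and y ∈ ℝ, the conditional expectation E[X | pX + qZ = y], defined as the ratio (∫ x exp(−(y−px)²/(2q²)) exp(−|x|) dx) / (∫ exp(−(y−px)²/(2q²)) exp(−|x|) dx), equals (1/p) · [exp(−2y/p)(y − q²/p) Φ((y − q²/p)/q) + (y + q²/p) Φ(−(y + q²/p)/q)] / [exp(−2y/p) Φ((y − q²/p)/q) + Φ(−(y + q²/p)/q)], where Φ is the standard normal cumulative distribution function. -/

import Mathlib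

open MeasureTheory Set
open scoped Topology

noncomputable section

/-- The standard normal cumulative distribution function
`Φ(z) = (2π)^{−1/2} ∫_{−∞}^z exp(−u²/2) du`. -/
def stdNormalCDF (z : ℝ) : ℝ :=
  (Real.sqrt (2 * Real.pi))⁻¹ * ∫ u in Iic z, Real.exp (-u ^ 2 / 2)

/-- The conditional expectation `E[X | pX + qZ = y]` for `X` Laplace and `Z` standard normal,
defined as a ratio of integrals over `ℝ`. -/
def lapCondExp (p q y : ℝ) : ℝ :=
  (∫ x : ℝ, x * Real.exp (-(y - p * x) ^ 2 / (2 * q ^ 2)) * Real.exp (-|x|)) /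
    (∫ x : ℝ, Real.exp (-(y - p * x) ^ 2 / (2 * q ^ 2)) * Real.exp (-|x|))


def gInt (z : ℝ) : ℝ := ∫ u in Iic z, Real.exp (-u ^ 2 / 2)

lemma int_gauss : Integrable fun u : ℝ => Real.exp (-u ^ 2 / 2) := by
  have h := integrable_exp_neg_mul_sq (by norm_num : (0:ℝ) < 1/2)
  convert h using 2 with u
  ring_nf

lemma int_mul_gauss : Integrable fun u : ℝ => u * Real.exp (-u ^ 2 / 2) := by
  have h := integrable_mul_exp_neg_mul_sq (by norm_num : (0:ℝ) < 1/2)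
  convert h using 2 with u
  ring_nf

lemma gInt_pos (z : ℝ) : 0 < gInt z := by
  rw [gInt, setIntegral_pos_iff_support_of_nonneg_ae]
  · have : (Function.support fun u : ℝ => Real.exp (-u ^ 2 / 2)) = univ := by
      ext u; simp [Function.mem_support, Real.exp_ne_zero]
    rw [this, univ_inter]
    simp [Real.volume_Iic]
  · filter_upwards with u using (Real.exp_pos _).le
  · exact int_gauss.integrableOn

lemma gauss_M (z : ℝ) : ∫ u in Iic z, u * Real.exp (-u ^ 2 / 2) = -Real.exp (-z ^ 2 / 2) := by
  have hderiv : ∀ x ∈ Iic z, HasDerivAt (fun x : ℝ => -Real.exp (-x ^ 2 / 2))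
      (x * Real.exp (-x ^ 2 / 2)) x := by
    intro x _
    have h1 : HasDerivAt (fun x : ℝ => -x ^ 2 / 2) (-x) x := by
      have := ((hasDerivAt_pow 2 x).neg).div_const 2
      simpa using this.congr_deriv (by ring)
    have := (h1.exp).fun_neg
    simpa [mul_comm] using this.congr_deriv (by ring)
  have htends : Filter.Tendsto (fun x : ℝ => -Real.exp (-x ^ 2 / 2)) Filter.atBot (𝓝 0) := by
    rw [← neg_zero]
    apply Filter.Tendsto.neg
    apply Real.tendsto_exp_atBot.comp
    have h2 : Filter.Tendsto (fun x : ℝ => x ^ 2) Filter.atBot Filter.atTop := by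
      have := (Filter.tendsto_pow_atTop (α := ℝ) (n := 2) (by norm_num)).comp (Filter.tendsto_neg_atBot_atTop (G := ℝ))
      refine this.congr fun x => ?_
      simp [Function.comp, neg_pow]
    have : Filter.Tendsto (fun x : ℝ => -x ^ 2) Filter.atBot Filter.atBot :=
      (Filter.tendsto_neg_atTop_atBot (G := ℝ)).comp h2
    exact this.atBot_div_const (by norm_num)
  have := integral_Iic_of_hasDerivAt_of_tendsto' hderiv (int_mul_gauss.integrableOn) htends
  rw [this]; ring

lemma sub_aff (f : ℝ → ℝ) {s : ℝ} (m t : ℝ) (hs : 0 < s) :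
    ∫ u in Iic t, f (s * u + m) = s⁻¹ * ∫ x in Iic (s * t + m), f x := by
  rw [← integral_indicator measurableSet_Iic, ← integral_indicator measurableSet_Iic]
  have key : ∀ u : ℝ, indicator (Iic t) (fun u => f (s * u + m)) u
      = indicator (Iic (s * t + m)) f (s * u + m) := by
    intro u
    by_cases h : u ≤ t
    · rw [indicator_of_mem (mem_Iic.2 h), indicator_of_mem (mem_Iic.2 (by nlinarith))]
    · have h2 : s * u + m ∉ Iic (s * t + m) := by
        simp only [mem_Iic, not_le] at h ⊢; nlinarith
      rw [indicator_of_notMem (fun hc => h (mem_Iic.1 hc)), indicator_of_notMem h2]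
  simp only [key]
  have h1 : (∫ u : ℝ, indicator (Iic (s * t + m)) f (s * u + m))
      = ∫ u : ℝ, (fun v => indicator (Iic (s * t + m)) f (v + m)) (s * u) := rfl
  rw [h1, Measure.integral_comp_mul_left (fun v => indicator (Iic (s * t + m)) f (v + m)) s,
    integral_add_right_eq_self (μ := volume) (indicator (Iic (s * t + m)) f) m]
  rw [abs_of_pos (inv_pos.2 hs), smul_eq_mul]

lemma gaussIic (m : ℝ) {s : ℝ} (hs : 0 < s) :
    ∫ x in Iic (0:ℝ), Real.exp (-(x - m) ^ 2 / (2 * s ^ 2)) = s * gInt (-m / s) := by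
  have h := sub_aff (fun x => Real.exp (-(x - m) ^ 2 / (2 * s ^ 2))) m (-m / s) hs
  have h0 : s * (-m / s) + m = 0 := by field_simp; ring
  rw [h0] at h
  have key : ∀ u : ℝ, Real.exp (-(s * u + m - m) ^ 2 / (2 * s ^ 2)) = Real.exp (-u ^ 2 / 2) := by
    intro u; congr 1; field_simp; ring
  simp only [key] at h
  rw [show (∫ u in Iic (-m / s), Real.exp (-u ^ 2 / 2)) = gInt (-m / s) from rfl] at h
  rw [h]; field_simp

lemma xgaussIic (m : ℝ) {s : ℝ} (hs : 0 < s) :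
    ∫ x in Iic (0:ℝ), x * Real.exp (-(x - m) ^ 2 / (2 * s ^ 2))
      = s * (m * gInt (-m / s) - s * Real.exp (-m ^ 2 / (2 * s ^ 2))) := by
  have h := sub_aff (fun x => x * Real.exp (-(x - m) ^ 2 / (2 * s ^ 2))) m (-m / s) hs
  have h0 : s * (-m / s) + m = 0 := by field_simp; ring
  rw [h0] at h
  have key : ∀ u : ℝ, (s * u + m) * Real.exp (-(s * u + m - m) ^ 2 / (2 * s ^ 2))
      = s * (u * Real.exp (-u ^ 2 / 2)) + m * Real.exp (-u ^ 2 / 2) := by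
    intro u
    have : Real.exp (-(s * u + m - m) ^ 2 / (2 * s ^ 2)) = Real.exp (-u ^ 2 / 2) := by
      congr 1; field_simp; ring
    rw [this]; ring
  simp only [key] at h
  rw [integral_add ((int_mul_gauss.integrableOn).const_mul s)
    ((int_gauss.integrableOn).const_mul m), MeasureTheory.integral_const_mul, MeasureTheory.integral_const_mul,
    gauss_M] at h
  have hexp : Real.exp (-(-m / s) ^ 2 / 2) = Real.exp (-m ^ 2 / (2 * s ^ 2)) := by
    congr 1; ring
  rw [hexp] at h
  rw [show (∫ u in Iic (-m / s), Real.exp (-u ^ 2 / 2)) = gInt (-m / s) from rfl] at h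
  field_simp at h ⊢
  linarith

lemma reflIoi (f : ℝ → ℝ) : ∫ x in Ioi (0:ℝ), f x = ∫ x in Iic (0:ℝ), f (-x) := by
  rw [← integral_Ici_eq_integral_Ioi, ← integral_indicator measurableSet_Ici,
    ← integral_indicator measurableSet_Iic]
  have key : ∀ x : ℝ, indicator (Iic (0:ℝ)) (fun x => f (-x)) x
      = indicator (Ici (0:ℝ)) f (-x) := by
    intro x
    by_cases h : x ≤ 0
    · rw [indicator_of_mem (mem_Iic.2 h), indicator_of_mem (mem_Ici.2 (by linarith))]
    · rw [indicator_of_notMem (fun hc => h (mem_Iic.1 hc)),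
        indicator_of_notMem (fun hc => h (by simpa using neg_nonneg.1 (mem_Ici.1 hc)))]
  simp only [key]
  exact (integral_neg_eq_self (indicator (Ici (0:ℝ)) f) volume).symm

lemma stdNormalCDF_eq (z : ℝ) : stdNormalCDF z = (Real.sqrt (2 * Real.pi))⁻¹ * gInt z := rfl

/-- the closed form of `E[X | pX + qZ = y]` in terms of the standard normal CDF
for Laplace `X` and independent standard normal `Z`. -/
theorem laplace_cond_exp_formula (p q y : ℝ) (hp : 0 < p) (hq : 0 < q) :
    lapCondExp p q y = (1 / p) *
      ((Real.exp (-2 * y / p) * (y - q ^ 2 / p) * stdNormalCDF ((y - q ^ 2 / p) / q) +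
          (y + q ^ 2 / p) * stdNormalCDF (-(y + q ^ 2 / p) / q)) /
        (Real.exp (-2 * y / p) * stdNormalCDF ((y - q ^ 2 / p) / q) +
          stdNormalCDF (-(y + q ^ 2 / p) / q))) := by
  have hp' : p ≠ 0 := hp.ne'
  have hq' : q ≠ 0 := hq.ne'
  set s : ℝ := q / p with hsdef
  have hs : 0 < s := div_pos hq hp
  have hs' : s ≠ 0 := hs.ne'
  set m : ℝ := (y - q ^ 2 / p) / p with hmdef
  set m' : ℝ := (y + q ^ 2 / p) / p with hm'def
  set Cp : ℝ := -y / p + q ^ 2 / (2 * p ^ 2) with hCpdef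
  set Cm : ℝ := y / p + q ^ 2 / (2 * p ^ 2) with hCmdef
  -- integrable gaussian families
  have IG : Integrable fun x : ℝ => Real.exp (-x ^ 2 / (2 * s ^ 2)) := by
    have heq : (fun x : ℝ => Real.exp (-(2 * s ^ 2)⁻¹ * x ^ 2))
        = fun x : ℝ => Real.exp (-x ^ 2 / (2 * s ^ 2)) := by
      funext x; congr 1; ring
    rw [← heq]; exact integrable_exp_neg_mul_sq (by positivity)
  have IXG : Integrable fun x : ℝ => x * Real.exp (-x ^ 2 / (2 * s ^ 2)) := by
    have heq : (fun x : ℝ => x * Real.exp (-(2 * s ^ 2)⁻¹ * x ^ 2))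
        = fun x : ℝ => x * Real.exp (-x ^ 2 / (2 * s ^ 2)) := by
      funext x; congr 2; ring
    rw [← heq]; exact integrable_mul_exp_neg_mul_sq (by positivity)
  have igauss : ∀ a : ℝ, Integrable fun x : ℝ => Real.exp (-(x - a) ^ 2 / (2 * s ^ 2)) :=
    fun a => IG.comp_sub_right a
  have ixgauss : ∀ a : ℝ, Integrable fun x : ℝ => x * Real.exp (-(x - a) ^ 2 / (2 * s ^ 2)) := by
    intro a
    have heq : (fun x : ℝ => (x - a) * Real.exp (-(x - a) ^ 2 / (2 * s ^ 2))
        + a * Real.exp (-(x - a) ^ 2 / (2 * s ^ 2)))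
        = fun x : ℝ => x * Real.exp (-(x - a) ^ 2 / (2 * s ^ 2)) := by
      funext x; ring
    rw [← heq]
    exact (IXG.comp_sub_right a).add ((IG.comp_sub_right a).const_mul a)
  -- pointwise identities
  have hEminus : ∀ x : ℝ, x ≤ 0 →
      Real.exp (-(y - p * x) ^ 2 / (2 * q ^ 2)) * Real.exp (-|x|)
        = Real.exp Cm * Real.exp (-(x - m') ^ 2 / (2 * s ^ 2)) := by
    intro x hx
    rw [abs_of_nonpos hx, ← Real.exp_add, ← Real.exp_add]
    congr 1
    rw [hCmdef, hm'def, hsdef]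
    field_simp
    ring
  have hEplus : ∀ x : ℝ, 0 ≤ x →
      Real.exp (-(y - p * x) ^ 2 / (2 * q ^ 2)) * Real.exp (-|x|)
        = Real.exp Cp * Real.exp (-(x - m) ^ 2 / (2 * s ^ 2)) := by
    intro x hx
    rw [abs_of_nonneg hx, ← Real.exp_add, ← Real.exp_add]
    congr 1
    rw [hCpdef, hmdef, hsdef]
    field_simp
    ring
  -- integrability on pieces
  have hden_iic : IntegrableOn
      (fun x : ℝ => Real.exp (-(y - p * x) ^ 2 / (2 * q ^ 2)) * Real.exp (-|x|)) (Iic 0) := by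
    refine ((((igauss m').const_mul (Real.exp Cm))).integrableOn).congr_fun
      (fun x hx => (hEminus x hx).symm) measurableSet_Iic
  have hden_ioi : IntegrableOn
      (fun x : ℝ => Real.exp (-(y - p * x) ^ 2 / (2 * q ^ 2)) * Real.exp (-|x|)) (Ioi 0) := by
    refine ((((igauss m).const_mul (Real.exp Cp))).integrableOn).congr_fun
      (fun x hx => (hEplus x (le_of_lt hx)).symm) measurableSet_Ioi
  have hnum_iic : IntegrableOn
      (fun x : ℝ => x * Real.exp (-(y - p * x) ^ 2 / (2 * q ^ 2)) * Real.exp (-|x|)) (Iic 0) := by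
    refine (((ixgauss m').const_mul (Real.exp Cm)).integrableOn).congr_fun
      (fun x hx => ?_) measurableSet_Iic
    show Real.exp Cm * (x * Real.exp (-(x - m') ^ 2 / (2 * s ^ 2)))
        = x * Real.exp (-(y - p * x) ^ 2 / (2 * q ^ 2)) * Real.exp (-|x|)
    rw [mul_assoc x, hEminus x hx]; ring
  have hnum_ioi : IntegrableOn
      (fun x : ℝ => x * Real.exp (-(y - p * x) ^ 2 / (2 * q ^ 2)) * Real.exp (-|x|)) (Ioi 0) := by
    refine (((ixgauss m).const_mul (Real.exp Cp)).integrableOn).congr_fun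
      (fun x hx => ?_) measurableSet_Ioi
    show Real.exp Cp * (x * Real.exp (-(x - m) ^ 2 / (2 * s ^ 2)))
        = x * Real.exp (-(y - p * x) ^ 2 / (2 * q ^ 2)) * Real.exp (-|x|)
    rw [mul_assoc x, hEplus x (le_of_lt hx)]; ring
  -- piece values
  have DIic : (∫ x in Iic (0:ℝ), Real.exp (-(y - p * x) ^ 2 / (2 * q ^ 2)) * Real.exp (-|x|))
      = Real.exp Cm * (s * gInt (-m' / s)) := by
    rw [setIntegral_congr_fun measurableSet_Iic (fun x hx => hEminus x hx),
      MeasureTheory.integral_const_mul, gaussIic m' hs]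
  have DIoi : (∫ x in Ioi (0:ℝ), Real.exp (-(y - p * x) ^ 2 / (2 * q ^ 2)) * Real.exp (-|x|))
      = Real.exp Cp * (s * gInt (m / s)) := by
    rw [setIntegral_congr_fun measurableSet_Ioi (fun x hx => hEplus x (le_of_lt hx)),
      MeasureTheory.integral_const_mul,
      reflIoi fun x => Real.exp (-(x - m) ^ 2 / (2 * s ^ 2))]
    have key : ∀ x : ℝ, Real.exp (-(-x - m) ^ 2 / (2 * s ^ 2))
        = Real.exp (-(x - -m) ^ 2 / (2 * s ^ 2)) := by
      intro x; congr 1; ring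
    simp only [key]
    rw [gaussIic (-m) hs, neg_neg]
  have NIic : (∫ x in Iic (0:ℝ), x * Real.exp (-(y - p * x) ^ 2 / (2 * q ^ 2)) * Real.exp (-|x|))
      = Real.exp Cm * (s * (m' * gInt (-m' / s) - s * Real.exp (-m' ^ 2 / (2 * s ^ 2)))) := by
    rw [setIntegral_congr_fun measurableSet_Iic
      (fun x hx => by rw [mul_assoc x, hEminus x hx]; ring :
        EqOn _ (fun x => Real.exp Cm * (x * Real.exp (-(x - m') ^ 2 / (2 * s ^ 2)))) (Iic 0)),
      MeasureTheory.integral_const_mul, xgaussIic m' hs]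
  have NIoi : (∫ x in Ioi (0:ℝ), x * Real.exp (-(y - p * x) ^ 2 / (2 * q ^ 2)) * Real.exp (-|x|))
      = Real.exp Cp * (s * (m * gInt (m / s)) + s ^ 2 * Real.exp (-m ^ 2 / (2 * s ^ 2))) := by
    rw [setIntegral_congr_fun measurableSet_Ioi
      (fun x hx => by rw [mul_assoc x, hEplus x (le_of_lt hx)]; ring :
        EqOn _ (fun x => Real.exp Cp * (x * Real.exp (-(x - m) ^ 2 / (2 * s ^ 2)))) (Ioi 0)),
      MeasureTheory.integral_const_mul,
      reflIoi fun x => x * Real.exp (-(x - m) ^ 2 / (2 * s ^ 2))]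
    have key : ∀ x : ℝ, -x * Real.exp (-(-x - m) ^ 2 / (2 * s ^ 2))
        = -(x * Real.exp (-(x - -m) ^ 2 / (2 * s ^ 2))) := by
      intro x
      have : Real.exp (-(-x - m) ^ 2 / (2 * s ^ 2)) = Real.exp (-(x - -m) ^ 2 / (2 * s ^ 2)) := by
        congr 1; ring
      rw [this]; ring
    simp only [key]
    rw [integral_neg, xgaussIic (-m) hs, neg_neg]
    have : Real.exp (-(-m) ^ 2 / (2 * s ^ 2)) = Real.exp (-m ^ 2 / (2 * s ^ 2)) := by
      congr 1; ring
    rw [this]; ring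
  -- cross-term and exponent relations
  have hcross : Real.exp Cp * Real.exp (-m ^ 2 / (2 * s ^ 2))
      = Real.exp Cm * Real.exp (-m' ^ 2 / (2 * s ^ 2)) := by
    rw [← Real.exp_add, ← Real.exp_add]
    congr 1
    rw [hCpdef, hCmdef, hmdef, hm'def, hsdef]
    field_simp
    ring
  have hCpm : Real.exp Cp = Real.exp (-2 * y / p) * Real.exp Cm := by
    rw [← Real.exp_add]
    congr 1
    rw [hCpdef, hCmdef]
    ring
  -- assemble
  have hDsplit := intervalIntegral.integral_Iic_add_Ioi (b := (0:ℝ)) hden_iic hden_ioi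
  have hNsplit := intervalIntegral.integral_Iic_add_Ioi (b := (0:ℝ)) hnum_iic hnum_ioi
  rw [lapCondExp, ← hNsplit, ← hDsplit, NIic, NIoi, DIic, DIoi]
  set A : ℝ := gInt (m / s) with hA
  set B : ℝ := gInt (-m' / s) with hB
  have hApos : 0 < A := gInt_pos _
  have hBpos : 0 < B := gInt_pos _
  set E : ℝ := Real.exp (-2 * y / p) with hE
  have hEpos : 0 < E := Real.exp_pos _
  set c : ℝ := (Real.sqrt (2 * Real.pi))⁻¹ with hc
  have hcpos : 0 < c := by
    rw [hc]
    exact inv_pos.2 (Real.sqrt_pos.2 (by positivity))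
  -- rewrite stdNormalCDF args
  have harg1 : (y - q ^ 2 / p) / q = m / s := by rw [hmdef, hsdef]; field_simp
  have harg2 : -(y + q ^ 2 / p) / q = -m' / s := by rw [hm'def, hsdef]; field_simp
  rw [harg1, harg2, stdNormalCDF_eq, stdNormalCDF_eq, ← hA, ← hB, ← hc]
  -- numerator and denominator simplification
  have hexpCmS : Real.exp Cm * s ≠ 0 := by positivity
  have hnum_eq : Real.exp Cm * (s * (m' * B - s * Real.exp (-m' ^ 2 / (2 * s ^ 2))))
      + Real.exp Cp * (s * (m * A) + s ^ 2 * Real.exp (-m ^ 2 / (2 * s ^ 2)))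
      = Real.exp Cm * s * (E * (m * A) + m' * B) := by
    rw [hCpm] at hcross ⊢
    linear_combination s ^ 2 * hcross
  have hden_eq : Real.exp Cm * (s * B) + Real.exp Cp * (s * A)
      = Real.exp Cm * s * (E * A + B) := by
    rw [hCpm]; ring
  rw [hnum_eq, hden_eq, mul_div_mul_left _ _ hexpCmS]
  have hD0 : E * A + B ≠ 0 := by positivity
  have hD1 : E * (c * A) + c * B ≠ 0 := by positivity
  rw [hmdef, hm'def]
  field_simp
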